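/- Let R be a local commutative ring with maximal ideal M, and let x ∈ M be a nonzero prime element with M ≠ xR. Then the ideal xM is a 1-absorbing primary ideal that is not a primary ideal of R. -/

import Mathlib

def IsOneAbsorbingPrimary {R : Type*} [CommRing R] (I : Ideal R) : Prop :=
  I ≠ ⊤ ∧ ∀ a b c : R, ¬IsUnit a → ¬IsUnit b → ¬IsUnit c →
    a * b * c ∈ I → a * b ∈ I ∨ c ∈ I.radical

theorem oneAbsorbingPrimary_mul_maximalIdeal_not_primary {R : Type*} [CommRing R]
    [IsLocalRing R] (x : R) (hx : x ∈ IsLocalRing.maximalIdeal R) (hp : Prime x)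
    (hM : IsLocalRing.maximalIdeal R ≠ Ideal.span {x}) :
    IsOneAbsorbingPrimary (Ideal.span {x} * IsLocalRing.maximalIdeal R) ∧
      ¬(Ideal.span {x} * IsLocalRing.maximalIdeal R).IsPrimary := by
  set M := IsLocalRing.maximalIdeal R with hMdef
  set I := Ideal.span {x} * M with hIdef
  have hprime : (Ideal.span {x} : Ideal R).IsPrime :=
    (Ideal.span_singleton_prime hp.ne_zero).2 hp
  have hIle : I ≤ Ideal.span {x} := Ideal.mul_le_inf.trans inf_le_left
  have hIospan : Ideal.span {x} ≤ M := (Ideal.span_singleton_le_iff_mem _).2 hx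
  have hIleM : I ≤ M := hIle.trans hIospan
  -- radical of I is span {x}
  have hrad : I.radical = Ideal.span {x} := by
    apply le_antisymm
    · calc I.radical ≤ (Ideal.span {x}).radical := Ideal.radical_mono hIle
        _ = Ideal.span {x} := hprime.radical
    · rw [Ideal.span_le]
      intro y hy
      simp only [Set.mem_singleton_iff] at hy
      rw [hy]
      exact ⟨2, by rw [pow_two]; exact Ideal.mul_mem_mul (Ideal.mem_span_singleton_self x) hx⟩
  -- x ∉ I
  have hxnotI : x ∉ I := by
    intro hxI
    rw [hIdef, Ideal.mem_span_singleton_mul] at hxI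
    obtain ⟨y, hyM, hxy⟩ := hxI
    have h1 : x * (1 - y) = 0 := by ring_nf; rw [mul_comm] at hxy; linear_combination -hxy
    have hu : IsUnit (1 - y) := by
      by_contra hu
      have : (1 : R) ∈ M := by
        have hy' : y ∈ M := hyM
        have h1y : (1 - y) ∈ M := (IsLocalRing.mem_maximalIdeal (1 - y)).2 hu
        simpa using M.add_mem h1y hy'
      exact M.ne_top_iff_one.mp (IsLocalRing.maximalIdeal.isMaximal R).ne_top this
    exact hp.ne_zero ((hu.mul_left_eq_zero).1 h1)
  constructor
  · constructor
    · intro htop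
      exact (IsLocalRing.maximalIdeal.isMaximal R).ne_top (top_le_iff.1 (htop ▸ hIleM))
    · intro a b c ha hb hc habc
      have haM : a ∈ M := (IsLocalRing.mem_maximalIdeal a).2 ha
      have hbM : b ∈ M := (IsLocalRing.mem_maximalIdeal b).2 hb
      have hcM : c ∈ M := (IsLocalRing.mem_maximalIdeal c).2 hc
      have hdvd : x ∣ a * b * c := Ideal.mem_span_singleton.1 (hIle habc)
      rcases (hp.dvd_mul.1 hdvd) with h | h
      · rcases hp.dvd_mul.1 h with h' | h'
        · obtain ⟨a', rfl⟩ := h'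
          left
          rw [hIdef, mul_assoc]
          exact Ideal.mul_mem_mul (Ideal.mem_span_singleton_self x) (M.mul_mem_left a' hbM)
        · obtain ⟨b', rfl⟩ := h'
          left
          have : a * (x * b') = x * (b' * a) := by ring
          rw [hIdef, this]
          exact Ideal.mul_mem_mul (Ideal.mem_span_singleton_self x) (M.mul_mem_left b' haM)
      · right
        rw [hrad]
        exact Ideal.mem_span_singleton.2 h
  · intro hprm
    have hlt : Ideal.span {x} < M := lt_of_le_of_ne hIospan (Ne.symm hM)
    obtain ⟨m, hmM, hmx⟩ := SetLike.exists_of_lt hlt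
    have hxm : x * m ∈ I := Ideal.mul_mem_mul (Ideal.mem_span_singleton_self x) hmM
    rcases (Ideal.isPrimary_iff.mp hprm).2 hxm with h | h
    · exact hxnotI h
    · rw [hrad] at h
      exact hmx h
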